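/- For fixed λ ≠ 0 and weights α, β ≥ 0 with α + β = 1, define H_{λ,α,β}(a,b) := (1/λ)·log(α·e^{λa} + β·e^{λb}). Then H_{λ,α,β}(a,b) = (a+b)/2 + h(b−a), where h(u) := (1/(2λ))·[log(α + β·e^{λu}) + log(β + α·e^{−λu})] satisfies h(0) = 0 and |h'(u)| ≤ 1 for all u ∈ ℝ; in particular h is 1-Lipschitz. -/

import Mathlib

open Real

theorem stmt2 (l : ℝ) (hl : l ≠ 0) (α β : ℝ) (hα : 0 < α) (hβ : 0 < β)
    (hs : α + β = 1) (a b : ℝ) :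
    let h : ℝ → ℝ := fun u =>
      (1 / (2 * l)) * (Real.log (α + β * Real.exp (l * u)) +
        Real.log (β + α * Real.exp (-l * u)))
    (1 / l) * Real.log (α * Real.exp (l * a) + β * Real.exp (l * b)) =
        (a + b) / 2 + h (b - a) ∧
      h 0 = 0 ∧ (∀ u : ℝ, |deriv h u| ≤ 1) ∧ LipschitzWith 1 h := by
  intro h
  have pos1 : ∀ u : ℝ, 0 < α + β * Real.exp (l * u) := fun u =>
    add_pos hα (mul_pos hβ (Real.exp_pos _))
  have pos2 : ∀ u : ℝ, 0 < β + α * Real.exp (-l * u) := fun u =>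
    add_pos hβ (mul_pos hα (Real.exp_pos _))
  have h2l : (2 : ℝ) * l ≠ 0 := mul_ne_zero two_ne_zero hl
  -- derivative
  have hd : ∀ u : ℝ, HasDerivAt h
      ((1 / (2 * l)) * (β * (Real.exp (l * u) * l) / (α + β * Real.exp (l * u)) +
        α * (Real.exp (-l * u) * (-l)) / (β + α * Real.exp (-l * u)))) u := by
    intro u
    have d1 : HasDerivAt (fun u : ℝ => l * u) l u := by
      simpa using (hasDerivAt_id u).const_mul l
    have d1' : HasDerivAt (fun u : ℝ => -l * u) (-l) u := by
      simpa using (hasDerivAt_id u).const_mul (-l)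
    have e1 : HasDerivAt (fun u : ℝ => α + β * Real.exp (l * u))
        (β * (Real.exp (l * u) * l)) u :=
      (((Real.hasDerivAt_exp (l * u)).comp u d1).const_mul β).const_add α
    have e2 : HasDerivAt (fun u : ℝ => β + α * Real.exp (-l * u))
        (α * (Real.exp (-l * u) * (-l))) u :=
      (((Real.hasDerivAt_exp (-l * u)).comp u d1').const_mul α).const_add β
    exact ((e1.log (pos1 u).ne').add (e2.log (pos2 u).ne')).const_mul (1 / (2 * l))
  have hderiv : ∀ u : ℝ, deriv h u =
      (1 / 2) * (β * Real.exp (l * u) / (α + β * Real.exp (l * u)) -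
        α * Real.exp (-l * u) / (β + α * Real.exp (-l * u))) := by
    intro u
    rw [(hd u).deriv]
    field_simp
    ring
  have hbound : ∀ u : ℝ, |deriv h u| ≤ 1 := by
    intro u
    rw [hderiv u]
    have p1 : β * Real.exp (l * u) / (α + β * Real.exp (l * u)) ≤ 1 := by
      rw [div_le_one (pos1 u)]; linarith [hα.le]
    have p1' : 0 ≤ β * Real.exp (l * u) / (α + β * Real.exp (l * u)) :=
      div_nonneg (mul_nonneg hβ.le (Real.exp_pos _).le) (pos1 u).le
    have p2 : α * Real.exp (-l * u) / (β + α * Real.exp (-l * u)) ≤ 1 := by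
      rw [div_le_one (pos2 u)]; linarith [hβ.le]
    have p2' : 0 ≤ α * Real.exp (-l * u) / (β + α * Real.exp (-l * u)) :=
      div_nonneg (mul_nonneg hα.le (Real.exp_pos _).le) (pos2 u).le
    rw [abs_le]
    constructor <;> nlinarith
  have hdiff : Differentiable ℝ h := fun u => (hd u).differentiableAt
  refine ⟨?_, ?_, hbound, ?_⟩
  · -- identity
    set S := α * Real.exp (l * a) + β * Real.exp (l * b) with hSdef
    have hS : 0 < S := add_pos (mul_pos hα (Real.exp_pos _)) (mul_pos hβ (Real.exp_pos _))
    have e1 : S = Real.exp (l * a) * (α + β * Real.exp (l * (b - a))) := by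
      rw [mul_add, ← mul_assoc, mul_comm (Real.exp (l*a)) β, mul_assoc, ← Real.exp_add]
      ring_nf
      rw [hSdef]; ring
    have e2 : S = Real.exp (l * b) * (β + α * Real.exp (-l * (b - a))) := by
      rw [mul_add, ← mul_assoc, mul_comm (Real.exp (l*b)) α, mul_assoc, ← Real.exp_add]
      ring_nf
      rw [hSdef]; ring
    have l1 : Real.log (α + β * Real.exp (l * (b - a))) = Real.log S - l * a := by
      rw [e1, Real.log_mul (Real.exp_pos _).ne' (pos1 _).ne', Real.log_exp]; ring
    have l2 : Real.log (β + α * Real.exp (-l * (b - a))) = Real.log S - l * b := by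
      rw [e2, Real.log_mul (Real.exp_pos _).ne' (pos2 _).ne', Real.log_exp]; ring
    show (1 / l) * Real.log S = (a + b) / 2 + (1 / (2 * l)) *
      (Real.log (α + β * Real.exp (l * (b - a))) + Real.log (β + α * Real.exp (-l * (b - a))))
    rw [l1, l2]
    field_simp
    ring
  · show (1 / (2 * l)) * (Real.log (α + β * Real.exp (l * 0)) +
      Real.log (β + α * Real.exp (-l * 0))) = 0
    rw [mul_zero, neg_mul, mul_zero, neg_zero, Real.exp_zero, mul_one, mul_one, hs,
      add_comm β α, hs, Real.log_one]
    simp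
  · refine lipschitzWith_of_nnnorm_deriv_le hdiff fun x => ?_
    have := hbound x
    rw [← Real.norm_eq_abs] at this
    exact_mod_cast this
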